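/- Let M be an R-module, N a finitely generated R-module, and α a nonzero element of M ⊗_R N. Then there exists a finitely embedded quotient module L of M such that the image of α under the natural map M ⊗_R N → L ⊗_R N is nonzero. -/

import Mathlib

universe u

/-- A linear map is a pure monomorphism if it is injective and remains injective after
tensoring with every `R`-module. -/
def IsPureMono (R : Type u) [CommRing R] {M N : Type u} [AddCommGroup M] [Module R M]
    [AddCommGroup N] [Module R N] (f : M →ₗ[R] N) : Prop :=
  Function.Injective f ∧
    ∀ (L : Type u) [AddCommGroup L] [Module R L], Function.Injective (LinearMap.rTensor L f)

/-- A module `D` is pure injective if every homomorphism into `D` extends along every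
pure monomorphism. -/
def IsPureInjective (R : Type u) [CommRing R] (D : Type u) [AddCommGroup D] [Module R D] :
    Prop :=
  ∀ (M N : Type u) [AddCommGroup M] [Module R M] [AddCommGroup N] [Module R N]
    (f : M →ₗ[R] N), IsPureMono R f → ∀ g : M →ₗ[R] D, ∃ h : N →ₗ[R] D, h ∘ₗ f = g

/-- A module is finitely embedded if it embeds into the injective envelope of a direct sum
of finitely many simple modules, i.e. into an injective module which is an essential
extension of a finitely generated semisimple submodule. -/
def FinitelyEmbedded (R : Type u) [CommRing R] (M : Type u) [AddCommGroup M] [Module R M] :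
    Prop :=
  ∃ E : ModuleCat.{u} R, Module.Injective R E ∧
    ∃ S : Submodule R E, IsSemisimpleModule R S ∧ S.FG ∧
      (∀ P : Submodule R E, P ≠ ⊥ → S ⊓ P ≠ ⊥) ∧
      ∃ f : M →ₗ[R] E, Function.Injective f

section Helpers
open LinearMap Submodule

variable {R : Type u} [CommRing R]

lemma myEmbedInjective (X : Type u) [AddCommGroup X] [Module R X] :
    ∃ (I : Type u) (_ : AddCommGroup I) (_ : Module R I), Module.Injective R I ∧
      ∃ e : X →ₗ[R] I, Function.Injective e := by
  let Iobj : ModuleCat.{u} R := CategoryTheory.Injective.under (ModuleCat.of R X)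
  haveI : CategoryTheory.Injective (ModuleCat.of R ↥Iobj) :=
    (inferInstance : CategoryTheory.Injective Iobj)
  have hinj : Module.Injective R ↥Iobj := Module.injective_module_of_injective_object R ↥Iobj
  let e : ModuleCat.of R X ⟶ Iobj := CategoryTheory.Injective.ι _
  have he : Function.Injective e := by
    rw [← ModuleCat.mono_iff_injective]
    infer_instance
  exact ⟨Iobj, inferInstance, inferInstance, hinj, e.hom, he⟩

lemma myHull (X : Type u) [AddCommGroup X] [Module R X] :
    ∃ (E : Type u) (_ : AddCommGroup E) (_ : Module R E), Module.Injective R E ∧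
      ∃ j : X →ₗ[R] E, Function.Injective j ∧
        ∀ P : Submodule R E, P ≠ ⊥ → LinearMap.range j ⊓ P ≠ ⊥ := by
  obtain ⟨I, _, _, hI, e, he⟩ := myEmbedInjective (R := R) X
  set W : Submodule R I := LinearMap.range e with hWdef
  set A : Set (Submodule R I) :=
    {E | W ≤ E ∧ ∀ x : I, x ∈ E → x ≠ 0 → W ⊓ span R {x} ≠ ⊥} with hAdef
  have hWA : W ∈ A := by
    refine ⟨le_rfl, fun x hx hx0 => ?_⟩
    rw [Submodule.ne_bot_iff]
    exact ⟨x, ⟨hx, Submodule.mem_span_singleton_self x⟩, hx0⟩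
  obtain ⟨E, -, hE⟩ := zorn_le_nonempty₀ A (fun c hcA hc y hy => by
    refine ⟨sSup c, ⟨?_, ?_⟩, fun z hz => le_sSup hz⟩
    · exact le_trans (hcA hy).1 (le_sSup hy)
    · intro x hx hx0
      obtain ⟨z, hzc, hxz⟩ := (Submodule.mem_sSup_of_directed ⟨y, hy⟩ hc.directedOn).mp hx
      exact (hcA hzc).2 x hxz hx0) W hWA
  set B : Set (Submodule R I) := {C | C ⊓ E = ⊥} with hBdef
  have hbotB : (⊥ : Submodule R I) ∈ B := by simp [hBdef]
  obtain ⟨C, -, hC⟩ := zorn_le_nonempty₀ B (fun c hcB hc y hy => by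
    refine ⟨sSup c, ?_, fun z hz => le_sSup hz⟩
    rw [hBdef, Set.mem_setOf_eq, eq_bot_iff]
    intro x hx
    obtain ⟨hx1, hx2⟩ := Submodule.mem_inf.mp hx
    obtain ⟨z, hzc, hxz⟩ := (Submodule.mem_sSup_of_directed ⟨y, hy⟩ hc.directedOn).mp hx1
    have : x ∈ z ⊓ E := Submodule.mem_inf.mpr ⟨hxz, hx2⟩
    rw [hcB hzc] at this
    exact this) ⊥ hbotB
  -- the projection
  have hCE : C ⊓ E = ⊥ := hC.prop
  set σ : (↥E × ↥C) →ₗ[R] I := (E.subtype).coprod (C.subtype) with hσdef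
  have hσ : Function.Injective σ := by
    rintro ⟨e1, c1⟩ ⟨e2, c2⟩ h
    simp only [hσdef, LinearMap.coprod_apply, Submodule.coe_subtype] at h
    have hd : ((e1 : I) - e2) ∈ E ⊓ C := by
      constructor
      · exact sub_mem e1.2 e2.2
      · have : ((e1 : I) - e2) = (c2 : I) - c1 := by
          rw [sub_eq_sub_iff_add_eq_add, h, add_comm]
        rw [this]; exact sub_mem c2.2 c1.2
    rw [inf_comm, hCE] at hd
    have h1 : (e1 : I) = e2 := by
      have := (Submodule.mem_bot R).mp hd; exact sub_eq_zero.mp this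
    have h2 : (c1 : I) = c2 := by
      rw [h1] at h
      exact add_left_cancel h
    exact Prod.ext (Subtype.ext h1) (Subtype.ext h2)
  obtain ⟨π, hπ⟩ := hI.out σ hσ (E.subtype ∘ₗ LinearMap.fst R ↥E ↥C)
  have hπE : ∀ x ∈ E, π x = x := by
    intro x hx
    have := hπ (⟨x, hx⟩, 0)
    simpa [hσdef] using this
  have hπC : ∀ x ∈ C, π x = 0 := by
    intro x hx
    have := hπ (0, ⟨x, hx⟩)
    simpa [hσdef] using this
  -- E is essential in range π
  have hEess : ∀ y : I, π y ≠ 0 → ∃ z : I, z ≠ 0 ∧ z ∈ E ∧ z ∈ span R {π y} := by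
    intro y hy
    have hyC : y ∉ C := fun h => hy (hπC y h)
    have hDE : (span R {y} ⊔ C) ⊓ E ≠ ⊥ := by
      intro hbot
      have hCD : C ≤ span R {y} ⊔ C := le_sup_right
      have := hC.le_of_ge hbot hCD
      exact hyC (this (le_sup_left (a := span R {y}) (Submodule.mem_span_singleton_self y)))
    obtain ⟨z, hzmem, hz0⟩ := Submodule.ne_bot_iff _ |>.mp hDE
    obtain ⟨hzD, hzE⟩ := Submodule.mem_inf.mp hzmem
    obtain ⟨u, hu, cc, hcc, huz⟩ := Submodule.mem_sup.mp hzD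
    obtain ⟨r, hr⟩ := Submodule.mem_span_singleton.mp hu
    have hπz : π z = z := hπE z hzE
    have : z = r • π y := by
      rw [← hπz, ← huz, map_add, hπC cc hcc, add_zero, ← hr, map_smul]
    exact ⟨z, hz0, hzE, this ▸ Submodule.smul_mem _ r (Submodule.mem_span_singleton_self (π y))⟩
  -- range π ∈ A hence = E
  have hELErange : E ≤ LinearMap.range π := fun x hx => ⟨x, hπE x hx⟩
  have hrangeA : LinearMap.range π ∈ A := by
    refine ⟨le_trans hE.prop.1 hELErange, ?_⟩
    rintro x ⟨y, rfl⟩ hx0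
    obtain ⟨z, hz0, hzE, hzspan⟩ := hEess y hx0
    have hWz := hE.prop.2 z hzE hz0
    obtain ⟨w, hw, hw0⟩ := Submodule.ne_bot_iff _ |>.mp hWz
    obtain ⟨hwW, hwz⟩ := Submodule.mem_inf.mp hw
    rw [Submodule.ne_bot_iff]
    refine ⟨w, Submodule.mem_inf.mpr ⟨hwW, ?_⟩, hw0⟩
    exact (Submodule.span_singleton_le_iff_mem _ _).mpr hzspan hwz
  have hrangeE : LinearMap.range π = E :=
    le_antisymm (hE.le_of_ge hrangeA hELErange) hELErange
  -- E is injective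
  have hmemE : ∀ x : I, π x ∈ E := fun x => hrangeE ▸ LinearMap.mem_range_self π x
  set ρ : I →ₗ[R] ↥E := LinearMap.codRestrict E π hmemE with hρdef
  have hEinj : Module.Injective R ↥E := by
    constructor
    intro XX YY _ _ _ _ f hf g
    obtain ⟨F, hF⟩ := hI.out f hf (E.subtype ∘ₗ g)
    refine ⟨ρ ∘ₗ F, fun x => ?_⟩
    apply Subtype.ext
    simp only [hρdef, LinearMap.comp_apply, LinearMap.codRestrict_apply]
    rw [hF x]
    exact hπE _ (g x).2
  -- the embedding j
  have hWE : W ≤ E := hE.prop.1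
  set j : X →ₗ[R] ↥E := LinearMap.codRestrict E e (fun x => hWE ⟨x, rfl⟩) with hjdef
  have hj : Function.Injective j := by
    intro a b hab
    exact he (congrArg Subtype.val hab)
  refine ⟨↥E, inferInstance, inferInstance, hEinj, j, hj, ?_⟩
  intro P hP
  obtain ⟨p, hpP, hp0⟩ := Submodule.ne_bot_iff _ |>.mp hP
  have hpI : (p : I) ≠ 0 := fun h => hp0 (Subtype.ext h)
  have := hE.prop.2 (p : I) p.2 hpI
  obtain ⟨w, hw, hw0⟩ := Submodule.ne_bot_iff _ |>.mp this
  obtain ⟨hwW, hwspan⟩ := Submodule.mem_inf.mp hw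
  obtain ⟨r, hr⟩ := Submodule.mem_span_singleton.mp hwspan
  obtain ⟨x₀, hx₀⟩ := hwW
  rw [Submodule.ne_bot_iff]
  refine ⟨r • p, Submodule.mem_inf.mpr ⟨⟨x₀, ?_⟩, Submodule.smul_mem P r hpP⟩, ?_⟩
  · apply Subtype.ext
    simp only [hjdef, LinearMap.codRestrict_apply]
    rw [hx₀, ← hr]
    rfl
  · intro h
    apply hw0
    rw [← hr]
    have : ((r • p : ↥E) : I) = r • (p : I) := rfl
    rw [← this, h]
    rfl


end Helpers

open LinearMap Submodule in
theorem exists_finitelyEmbedded_quotient (R : Type u) [CommRing R] (M N : Type u)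
    [AddCommGroup M] [Module R M] [AddCommGroup N] [Module R N] [Module.Finite R N]
    (α : TensorProduct R M N) (hα : α ≠ 0) :
    ∃ K : Submodule R M, FinitelyEmbedded R (M ⧸ K) ∧
      LinearMap.rTensor N K.mkQ α ≠ 0 := by
  classical
  obtain ⟨n, v, hv⟩ := Module.Finite.exists_fin (R := R) (M := N)
  set f : R →ₗ[R] TensorProduct R M N := LinearMap.toSpanSingleton R _ α with hfdef
  have hker : LinearMap.ker f ≠ ⊤ := by
    intro hk
    have h1 : (1 : R) ∈ LinearMap.ker f := hk ▸ Submodule.mem_top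
    apply hα
    simpa [hfdef] using h1
  obtain ⟨𝔪, h𝔪, hle⟩ := Ideal.exists_le_maximal _ hker
  haveI hsimp : IsSimpleModule R (R ⧸ 𝔪) := isSimpleModule_iff_isCoatom.mpr h𝔪.out
  haveI hX : IsSemisimpleModule R (R ⧸ 𝔪) := by
    haveI h2 : IsSimpleModule R (⊤ : Submodule R (R ⧸ 𝔪)) :=
      IsSimpleModule.congr Submodule.topEquiv
    exact IsSemisimpleModule.of_sSup_simples_eq_top
      (top_unique (le_sSup (show (⊤ : Submodule R (R ⧸ 𝔪)) ∈
        {m : Submodule R (R ⧸ 𝔪) | IsSimpleModule R m} from h2)))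
  obtain ⟨E, _, _, hEinj, j, hj, hess⟩ := myHull (R := R) (R ⧸ 𝔪)
  have hle' : LinearMap.ker f ≤ Submodule.comap (LinearMap.id : R →ₗ[R] R) 𝔪 := by
    simpa using hle
  set φ₀ : ↥(LinearMap.range f) →ₗ[R] (R ⧸ 𝔪) :=
    (Submodule.mapQ (LinearMap.ker f) 𝔪 LinearMap.id hle') ∘ₗ
      (LinearMap.quotKerEquivRange f).symm.toLinearMap with hφ₀def
  obtain ⟨h, hh⟩ := hEinj.out (LinearMap.range f).subtype (Submodule.injective_subtype _)
    (j ∘ₗ φ₀)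
  have hαmem : α ∈ LinearMap.range f := ⟨1, by simp [hfdef]⟩
  have hone : φ₀ ⟨α, hαmem⟩ = Submodule.Quotient.mk 1 := by
    have h1 : LinearMap.quotKerEquivRange f (Submodule.Quotient.mk 1) = ⟨α, hαmem⟩ := by
      apply Subtype.ext
      rw [LinearMap.quotKerEquivRange_apply_mk]
      simp [hfdef]
    have h2 : (LinearMap.quotKerEquivRange f).symm ⟨α, hαmem⟩ = Submodule.Quotient.mk 1 := by
      rw [LinearEquiv.symm_apply_eq]; exact h1.symm
    rw [hφ₀def]
    simp only [LinearMap.comp_apply, LinearEquiv.coe_toLinearMap]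
    rw [h2, Submodule.mapQ_apply]
    rfl
  have hhα : h α ≠ 0 := by
    have e1 : h α = j (φ₀ ⟨α, hαmem⟩) := hh ⟨α, hαmem⟩
    rw [e1, hone]
    intro hcontra
    have hz : (Submodule.Quotient.mk (1 : R) : R ⧸ 𝔪) = 0 := by
      apply hj; rw [hcontra, map_zero]
    rw [Submodule.Quotient.mk_eq_zero] at hz
    exact h𝔪.ne_top ((Ideal.eq_top_iff_one 𝔪).mpr hz)
  set g := TensorProduct.curry h with hgdef
  set ψ : M →ₗ[R] (Fin n → E) := LinearMap.pi (fun i => g.flip (v i)) with hψdef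
  set K := LinearMap.ker ψ with hKdef
  have hKg : K ≤ LinearMap.ker g := by
    intro m hm
    rw [LinearMap.mem_ker]
    apply LinearMap.ext_on hv
    intro x hx
    obtain ⟨i, rfl⟩ := hx
    have hm0 : ψ m = 0 := hm
    have := congrFun hm0 i
    simpa [hψdef] using this
  set hbar : TensorProduct R (M ⧸ K) N →ₗ[R] E :=
    TensorProduct.lift (K.liftQ g hKg) with hbardef
  have hfact : ∀ t : TensorProduct R M N,
      hbar (LinearMap.rTensor N K.mkQ t) = h t := by
    intro t
    have hc : hbar ∘ₗ LinearMap.rTensor N K.mkQ = h := by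
      apply TensorProduct.ext'
      intro m x
      simp [hbardef, hgdef, Submodule.liftQ_apply, TensorProduct.curry_apply]
    exact congrFun (congrArg DFunLike.coe hc) t
  refine ⟨K, ?_, fun H => hhα (by rw [← hfact α, H, map_zero])⟩
  -- FinitelyEmbedded
  haveI hXfin : Module.Finite R (R ⧸ 𝔪) := inferInstance
  set bigj : (Fin n → (R ⧸ 𝔪)) →ₗ[R] (Fin n → E) :=
    LinearMap.pi (fun i => j ∘ₗ LinearMap.proj i) with hbigjdef
  haveI hpiX : IsSemisimpleModule R (Fin n → (R ⧸ 𝔪)) :=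
    isSemisimpleModule_of_isSemisimpleModule_submodule'
      (fun i => IsSemisimpleModule.range (LinearMap.single R (fun _ => (R ⧸ 𝔪)) i))
      (LinearMap.iSup_range_single R _)
  set S : Submodule R (Fin n → E) := LinearMap.range bigj with hSdef
  have hSss : IsSemisimpleModule R ↥S := IsSemisimpleModule.range bigj
  have hSfg : S.FG := Module.Finite.iff_fg.mp (Module.Finite.range bigj)
  have hinjpi : Module.Injective R (Fin n → E) := by
    constructor
    intro XX YY _ _ _ _ ff hff gg
    have H := fun i => hEinj.out ff hff ((LinearMap.proj i) ∘ₗ gg)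
    choose hh' hhp using H
    exact ⟨LinearMap.pi hh', fun x => funext fun i => by simpa using hhp i x⟩
  have hessS : ∀ P : Submodule R (Fin n → E), P ≠ ⊥ → S ⊓ P ≠ ⊥ := by
    intro P hP
    obtain ⟨y, hyP, hy0⟩ := Submodule.ne_bot_iff _ |>.mp hP
    have key : ∀ t : Finset (Fin n), ∃ r : R, r • y ≠ 0 ∧
        ∀ i ∈ t, (r • y) i ∈ LinearMap.range j := by
      intro t
      induction t using Finset.induction_on with
      | empty => exact ⟨1, by simpa using hy0, by simp⟩
      | insert a t hat ih =>
        obtain ⟨r, hr0, hrt⟩ := ih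
        by_cases hza : (r • y) a = 0
        · refine ⟨r, hr0, fun i hi => ?_⟩
          rcases Finset.mem_insert.mp hi with rfl | hit
          · rw [hza]; exact Submodule.zero_mem _
          · exact hrt i hit
        · have hsp : span R {(r • y) a} ≠ ⊥ := by
            rwa [Ne, Submodule.span_singleton_eq_bot]
          obtain ⟨w, hw, hw0⟩ := Submodule.ne_bot_iff _ |>.mp (hess _ hsp)
          obtain ⟨hwj, hwsp⟩ := Submodule.mem_inf.mp hw
          obtain ⟨s, hs⟩ := Submodule.mem_span_singleton.mp hwsp
          refine ⟨s * r, ?_, fun i hi => ?_⟩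
          · intro hcon
            apply hw0
            rw [← hs]
            have := congrFun hcon a
            simpa [mul_smul] using this
          · rcases Finset.mem_insert.mp hi with rfl | hit
            · have : ((s * r) • y) i = s • ((r • y) i) := by simp [mul_smul]
              rw [this, hs]; exact hwj
            · have : ((s * r) • y) i = s • ((r • y) i) := by simp [mul_smul]
              rw [this]
              exact Submodule.smul_mem _ s (hrt i hit)
    obtain ⟨r, hr0, hmem⟩ := key Finset.univ
    choose x hx using fun i => hmem i (Finset.mem_univ i)
    rw [Submodule.ne_bot_iff]
    refine ⟨r • y, Submodule.mem_inf.mpr ⟨⟨x, ?_⟩, Submodule.smul_mem P r hyP⟩, hr0⟩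
    funext i
    simp only [hbigjdef, LinearMap.pi_apply, LinearMap.comp_apply, LinearMap.proj_apply]
    exact hx i
  have hKer : LinearMap.ker ψ ≤ K := le_of_eq hKdef.symm
  set fembed : (M ⧸ K) →ₗ[R] (Fin n → E) := K.liftQ ψ hKer with hfembeddef
  have hfinj : Function.Injective fembed := by
    rw [← LinearMap.ker_eq_bot]
    exact Submodule.ker_liftQ_eq_bot _ _ _ (le_of_eq hKdef)
  exact ⟨ModuleCat.of R (Fin n → E), hinjpi, S, hSss, hSfg, hessS, fembed, hfinj⟩
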